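/- arXiv:1312.7704 — 4 statements merged into one kernel-verified Lean document; each statement's English description precedes it below -/
import Mathlib

section
/- Let λ₁, λ₂ ∈ ℝ with λ₁² + λ₂² ≤ 2(λ₁−λ₂)², let δ ∈ (0,1], and let Q_δ = [[λ₁²+λ₂²+2δ², −(λ₁+λ₂)], [−(λ₁+λ₂), 2]]. Then for every V = (V₁,V₂) ∈ ℂ², (Q_δ V, V) ≥ (1/8) ((λ₁²+λ₂²+2δ²)|V₁|² + 2|V₂|²). -/
open Matrix

/-- The 2×2 quasi-symmetriser Q_δ(λ₁,λ₂), as a complex matrix. -/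
noncomputable def Qd (l1 l2 δ : ℝ) : Matrix (Fin 2) (Fin 2) ℂ :=
  !![((l1^2 + l2^2 + 2*δ^2 : ℝ) : ℂ), ((-(l1+l2) : ℝ) : ℂ);
     ((-(l1+l2) : ℝ) : ℂ), (2 : ℂ)]

/-- The 2×2 companion (Sylvester) matrix with eigenvalues λ₁, λ₂. -/
noncomputable def Amat (l1 l2 : ℝ) : Matrix (Fin 2) (Fin 2) ℂ :=
  !![(0 : ℂ), (1 : ℂ); ((-(l1*l2) : ℝ) : ℂ), ((l1+l2 : ℝ) : ℂ)]

theorem stmt_8 (l1 l2 δ : ℝ) (hcond : l1^2 + l2^2 ≤ 2*(l1 - l2)^2)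
    (hδ : δ ∈ Set.Ioc (0:ℝ) 1) (V : Fin 2 → ℂ) :
    (1/8) * ((l1^2 + l2^2 + 2*δ^2) * ‖V 0‖^2 + 2*‖V 1‖^2) ≤
      (dotProduct (star V) ((Qd l1 l2 δ).mulVec V)).re := by
  obtain ⟨hδ0, hδ1⟩ := hδ
  have hb : (l1+l2)^2 ≤ (3/2)*(l1^2+l2^2) := by nlinarith [sq_nonneg (l1-l2)]
  have key : (dotProduct (star V) ((Qd l1 l2 δ).mulVec V)).re =
      (l1^2 + l2^2 + 2*δ^2) * ((V 0).re^2 + (V 0).im^2)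
        + 2*((V 1).re^2 + (V 1).im^2)
        - 2*(l1+l2)*((V 0).re*(V 1).re + (V 0).im*(V 1).im) := by
    simp only [Qd, dotProduct, Matrix.mulVec, Fin.sum_univ_two,
      Matrix.cons_val', Matrix.cons_val_zero, Matrix.cons_val_one, Matrix.head_cons,
      Matrix.empty_val', Matrix.cons_val_fin_one, Matrix.head_fin_const,
      Matrix.of_apply]
    simp only [Pi.star_apply, Complex.star_def, Complex.add_re, Complex.mul_re,
      Complex.add_im, Complex.mul_im, Complex.conj_re, Complex.conj_im,
      Complex.ofReal_re, Complex.ofReal_im]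
    norm_num
    ring
  rw [key]
  have h0 : ‖V 0‖^2 = (V 0).re^2 + (V 0).im^2 := by
    simp [Complex.sq_norm, Complex.normSq_apply]; ring
  have h1 : ‖V 1‖^2 = (V 1).re^2 + (V 1).im^2 := by
    simp [Complex.sq_norm, Complex.normSq_apply]; ring
  rw [h0, h1]
  set p := (V 0).re; set q := (V 0).im; set r := (V 1).re; set s := (V 1).im
  nlinarith [sq_nonneg (4*(l1+l2)*p - 7*r), sq_nonneg (4*(l1+l2)*q - 7*s),
    mul_le_mul_of_nonneg_right hb (sq_nonneg p),
    mul_le_mul_of_nonneg_right hb (sq_nonneg q),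
    sq_nonneg p, sq_nonneg q, sq_nonneg r, sq_nonneg s,
    mul_nonneg (mul_pos hδ0 hδ0).le (sq_nonneg p),
    mul_nonneg (mul_pos hδ0 hδ0).le (sq_nonneg q),
    mul_nonneg (sq_nonneg l1) (sq_nonneg p), mul_nonneg (sq_nonneg l2) (sq_nonneg p),
    mul_nonneg (sq_nonneg l1) (sq_nonneg q), mul_nonneg (sq_nonneg l2) (sq_nonneg q)]
end

section
/- Let λ₁, λ₂ ∈ ℝ, δ ∈ (0,1], with |λᵢ| ≤ K for i = 1,2 and some K > 0. Let Q_δ = [[λ₁²+λ₂²+2δ², −(λ₁+λ₂)], [−(λ₁+λ₂), 2]]. Then there exists C₂ > 0 depending only on K such that C₂^{-1} δ² |V|² ≤ (Q_δ V, V) ≤ C₂ |V|² for all V ∈ ℂ². -/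
open Matrix

lemma Qd_key (l1 l2 δ : ℝ) (V : Fin 2 → ℂ) :
    (dotProduct (star V) ((Qd l1 l2 δ).mulVec V)).re
    = ‖(l1:ℂ) * V 0 - V 1‖^2 + ‖(l2:ℂ) * V 0 - V 1‖^2 + 2*δ^2*‖V 0‖^2 := by
  simp only [Complex.sq_norm, Complex.normSq_apply]
  simp [Qd, Matrix.mulVec, dotProduct, Fin.sum_univ_two, Complex.add_re, Complex.mul_re,
    Complex.mul_im, Complex.sub_re, Complex.sub_im, Complex.ofReal_re, Complex.ofReal_im,
    ← Complex.ofReal_pow]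
  ring

set_option maxHeartbeats 1000000 in
theorem stmt_10 (K : ℝ) (hK : 0 < K) :
    ∃ C2 : ℝ, 0 < C2 ∧ ∀ l1 l2 : ℝ, |l1| ≤ K → |l2| ≤ K →
      ∀ δ ∈ Set.Ioc (0:ℝ) 1, ∀ V : Fin 2 → ℂ,
        C2⁻¹ * δ^2 * (‖V 0‖^2 + ‖V 1‖^2) ≤
          (dotProduct (star V) ((Qd l1 l2 δ).mulVec V)).re ∧
        (dotProduct (star V) ((Qd l1 l2 δ).mulVec V)).re ≤
          C2 * (‖V 0‖^2 + ‖V 1‖^2) := by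
  refine ⟨4*K^2 + 8, by positivity, fun l1 l2 h1 h2 δ hδ V => ?_⟩
  obtain ⟨hδ0, hδ1⟩ := hδ
  set a0 := ‖V 0‖ with ha0
  set a1 := ‖V 1‖ with ha1
  have ha0n : 0 ≤ a0 := norm_nonneg _
  have ha1n : 0 ≤ a1 := norm_nonneg _
  set n1 := ‖(l1:ℂ) * V 0 - V 1‖ with hn1
  set n2 := ‖(l2:ℂ) * V 0 - V 1‖ with hn2
  have hn1n : 0 ≤ n1 := norm_nonneg _
  have hn2n : 0 ≤ n2 := norm_nonneg _
  have hKa : 0 ≤ K := le_of_lt hK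
  have habs1 : ‖(l1:ℂ)‖ ≤ K := by rw [Complex.norm_real]; exact h1
  have habs2 : ‖(l2:ℂ)‖ ≤ K := by rw [Complex.norm_real]; exact h2
  -- triangle inequalities
  have ht1 : n1 ≤ K * a0 + a1 := by
    calc n1 ≤ ‖(l1:ℂ) * V 0‖ + ‖V 1‖ := norm_sub_le _ _
    _ ≤ K * a0 + a1 := by
        rw [norm_mul]
        exact add_le_add (mul_le_mul_of_nonneg_right habs1 (norm_nonneg _)) le_rfl
  have ht2 : n2 ≤ K * a0 + a1 := by
    calc n2 ≤ ‖(l2:ℂ) * V 0‖ + ‖V 1‖ := norm_sub_le _ _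
    _ ≤ K * a0 + a1 := by
        rw [norm_mul]
        exact add_le_add (mul_le_mul_of_nonneg_right habs2 (norm_nonneg _)) le_rfl
  have hrev : a1 ≤ n1 + K * a0 := by
    calc a1 = ‖(l1:ℂ) * V 0 - ((l1:ℂ) * V 0 - V 1)‖ := by rw [ha1]; ring_nf
    _ ≤ ‖(l1:ℂ) * V 0‖ + n1 := norm_sub_le _ _
    _ ≤ K * a0 + n1 := by
        rw [norm_mul]
        exact add_le_add (mul_le_mul_of_nonneg_right habs1 (norm_nonneg _)) le_rfl
    _ = n1 + K * a0 := by ring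
  rw [Qd_key]
  constructor
  · -- lower bound
    rw [inv_mul_eq_div, div_mul_eq_mul_div, div_le_iff₀ (by positivity)]
    by_cases hc : a1^2 ≤ (4*K^2+4) * a0^2
    · nlinarith [sq_nonneg δ, sq_nonneg a0, sq_nonneg a1, mul_pos hδ0 hδ0,
        mul_nonneg (mul_nonneg (le_of_lt hδ0) (le_of_lt hδ0)) (sq_nonneg K),
        sq_nonneg (δ*a0), sq_nonneg (δ*a1), sq_nonneg n1, sq_nonneg n2,
        mul_nonneg (sq_nonneg δ) (mul_nonneg (sq_nonneg K) (sq_nonneg a0))]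
    · push_neg at hc
      have hKa0 : K * a0 ≤ a1 / 2 := by
        nlinarith [sq_nonneg (K*a0), sq_nonneg a1, mul_nonneg hKa ha0n]
      have hn1half : a1 / 2 ≤ n1 := by linarith
      have hn1sq : a1^2 / 4 ≤ n1^2 := by nlinarith
      have ha0a1 : a0^2 ≤ a1^2 := by nlinarith [sq_nonneg K]
      have hδsq : δ^2 ≤ 1 := by nlinarith
      have hQpos : (0:ℝ) ≤ n1^2 + n2^2 + 2*δ^2*a0^2 := by positivity
      have hA : δ^2 * (a0^2 + a1^2) ≤ a0^2 + a1^2 :=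
        mul_le_of_le_one_left (by positivity) hδsq
      have hB : 8*(n1^2 + n2^2 + 2*δ^2*a0^2) ≤ (n1^2 + n2^2 + 2*δ^2*a0^2)*(4*K^2+8) := by
        nlinarith [mul_nonneg (sq_nonneg K) hQpos]
      have hC : a0^2 + a1^2 ≤ 2*a1^2 := by linarith
      have hD : (0:ℝ) ≤ n2^2 + 2*δ^2*a0^2 := by positivity
      linarith
  · -- upper bound
    have h1sq : n1^2 ≤ (K*a0 + a1)^2 := pow_le_pow_left₀ hn1n ht1 2
    have h2sq : n2^2 ≤ (K*a0 + a1)^2 := pow_le_pow_left₀ hn2n ht2 2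
    have hδsq : δ^2 ≤ 1 := by nlinarith
    have hcross : (K*a0 + a1)^2 ≤ 2*K^2*a0^2 + 2*a1^2 := by
      nlinarith [sq_nonneg (K*a0 - a1)]
    have hδa : 2*δ^2*a0^2 ≤ 2*a0^2 := by nlinarith [sq_nonneg a0]
    have hKnn : (0:ℝ) ≤ K^2*a1^2 := by positivity
    have hKnn0 : (0:ℝ) ≤ K^2*a0^2 := by positivity
    nlinarith [sq_nonneg a0, sq_nonneg a1]
end

section
/- Let λ₁, λ₂ ∈ ℝ, δ ∈ (0,1], Q_δ = [[λ₁²+λ₂²+2δ², −(λ₁+λ₂)], [−(λ₁+λ₂), 2]], and let A = [[0, 1], [−λ₁λ₂, λ₁+λ₂]] be the companion (Sylvester) matrix with eigenvalues λ₁, λ₂. Then Q_δ A − A* Q_δ = [[0, 2δ²], [−2δ², 0]], and hence |((Q_δ A − A* Q_δ) V, V)| = 4δ² |Im(V̄₁ V₂)| ≤ 2δ (δ²|V₁|² + |V₂|²) for all V ∈ ℂ². -/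
open Matrix

theorem stmt_11 (l1 l2 δ : ℝ) (hδ : δ ∈ Set.Ioc (0:ℝ) 1) :
    Qd l1 l2 δ * Amat l1 l2 - (Amat l1 l2)ᴴ * Qd l1 l2 δ =
      !![(0 : ℂ), ((2*δ^2 : ℝ) : ℂ); ((-(2*δ^2) : ℝ) : ℂ), (0 : ℂ)] ∧
    ∀ V : Fin 2 → ℂ,
      ‖dotProduct (star V)
        ((Qd l1 l2 δ * Amat l1 l2 - (Amat l1 l2)ᴴ * Qd l1 l2 δ).mulVec V)‖ =
        4*δ^2 * |((starRingEnd ℂ) (V 0) * V 1).im| ∧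
      4*δ^2 * |((starRingEnd ℂ) (V 0) * V 1).im| ≤ 2*δ * (δ^2*‖V 0‖^2 + ‖V 1‖^2) := by
  obtain ⟨hδ0, hδ1⟩ := hδ
  have hM : Qd l1 l2 δ * Amat l1 l2 - (Amat l1 l2)ᴴ * Qd l1 l2 δ =
      !![(0 : ℂ), ((2*δ^2 : ℝ) : ℂ); ((-(2*δ^2) : ℝ) : ℂ), (0 : ℂ)] := by
    ext i j
    fin_cases i <;> fin_cases j <;>
      simp [Qd, Amat, Matrix.mul_apply, Fin.sum_univ_succ, conjTranspose_apply] <;>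
      push_cast <;> ring
  refine ⟨hM, fun V => ?_⟩
  rw [hM]
  constructor
  · have hd : dotProduct (star V)
        ((!![(0 : ℂ), ((2*δ^2 : ℝ) : ℂ); ((-(2*δ^2) : ℝ) : ℂ), (0 : ℂ)]).mulVec V) =
        ((2*δ^2 : ℝ) : ℂ) * ((starRingEnd ℂ) (V 0) * V 1 -
          (starRingEnd ℂ) ((starRingEnd ℂ) (V 0) * V 1)) := by
      simp [dotProduct, Matrix.mulVec, Fin.sum_univ_succ, mul_comm]
      push_cast
      ring
    rw [hd]
    rw [Complex.sub_conj]
    rw [norm_mul, norm_mul]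
    simp only [Complex.norm_real, Complex.norm_I, mul_one, Real.norm_eq_abs, abs_mul, abs_two]
    rw [abs_of_nonneg (sq_nonneg δ)]
    ring
  · have h1 : |((starRingEnd ℂ) (V 0) * V 1).im| ≤ ‖V 0‖ * ‖V 1‖ := by
      calc |((starRingEnd ℂ) (V 0) * V 1).im| ≤ ‖(starRingEnd ℂ) (V 0) * V 1‖ :=
            Complex.abs_im_le_norm _
        _ = ‖V 0‖ * ‖V 1‖ := by simp [_root_.map_mul]
    have key : 2*δ*‖V 0‖*‖V 1‖ ≤ δ^2*‖V 0‖^2 + ‖V 1‖^2 := by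
      nlinarith [sq_nonneg (δ*‖V 0‖ - ‖V 1‖)]
    nlinarith [norm_nonneg (V 0), norm_nonneg (V 1), mul_le_mul_of_nonneg_left h1 (le_of_lt (mul_pos (by positivity : (0:ℝ) < 4*δ^2) one_pos)), h1]
end

section
/- Under the assumptions λ₁² + λ₂² ≤ 2(λ₁−λ₂)² and |λᵢ| ≤ K, with Q_δ and A = [[0,1],[−λ₁λ₂, λ₁+λ₂]] as above, there is a constant C (depending only on K) such that |((Q_δ A − A* Q_δ) V, V)| ≤ C δ (Q_δ V, V) for all V ∈ ℂ² and δ ∈ (0,1]. -/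
open Matrix

theorem stmt_12 (K : ℝ) (hK : 0 < K) :
    ∃ C : ℝ, 0 < C ∧ ∀ l1 l2 : ℝ, |l1| ≤ K → |l2| ≤ K →
      l1^2 + l2^2 ≤ 2*(l1 - l2)^2 →
      ∀ δ ∈ Set.Ioc (0:ℝ) 1, ∀ V : Fin 2 → ℂ,
        ‖dotProduct (star V)
          ((Qd l1 l2 δ * Amat l1 l2 - (Amat l1 l2)ᴴ * Qd l1 l2 δ).mulVec V)‖ ≤
          C * δ * (dotProduct (star V) ((Qd l1 l2 δ).mulVec V)).re := by
  refine ⟨8, by norm_num, ?_⟩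
  intro l1 l2 hl1 hl2 hnd δ hδ V
  obtain ⟨hδ0, hδ1⟩ := hδ
  have hM : Qd l1 l2 δ * Amat l1 l2 - (Amat l1 l2)ᴴ * Qd l1 l2 δ
      = !![0, ((2*δ^2:ℝ):ℂ); ((-(2*δ^2):ℝ):ℂ), 0] := by
    ext i j
    fin_cases i <;> fin_cases j <;>
      simp [Qd, Amat, Matrix.mul_apply, Fin.sum_univ_two, Matrix.conjTranspose_apply] <;>
      push_cast <;> ring
  rw [hM]
  set v0 := V 0
  set v1 := V 1
  set x := ‖v0‖ with hxdef
  set y := ‖v1‖ with hydef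
  have hx : 0 ≤ x := norm_nonneg _
  have hy : 0 ≤ y := norm_nonneg _
  set r := ((starRingEnd ℂ) v0 * v1).re with hrdef
  have hr : |r| ≤ x * y := by
    calc |r| ≤ ‖(starRingEnd ℂ) v0 * v1‖ := Complex.abs_re_le_norm _
      _ = x * y := by rw [norm_mul, Complex.norm_conj]
  -- LHS
  have hL : ‖dotProduct (star V)
      ((!![0, ((2*δ^2:ℝ):ℂ); ((-(2*δ^2):ℝ):ℂ), 0]).mulVec V)‖ ≤ 4*δ^2*(x*y) := by
    have heq : dotProduct (star V)
        ((!![0, ((2*δ^2:ℝ):ℂ); ((-(2*δ^2):ℝ):ℂ), 0]).mulVec V)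
        = (starRingEnd ℂ) v0 * (((2*δ^2:ℝ):ℂ) * v1)
          + (starRingEnd ℂ) v1 * (((-(2*δ^2):ℝ):ℂ) * v0) := by
      simp [dotProduct, Matrix.mulVec, Fin.sum_univ_two, v0, v1]
    rw [heq]
    calc ‖(starRingEnd ℂ) v0 * (((2*δ^2:ℝ):ℂ) * v1)
          + (starRingEnd ℂ) v1 * (((-(2*δ^2):ℝ):ℂ) * v0)‖
        ≤ ‖(starRingEnd ℂ) v0 * (((2*δ^2:ℝ):ℂ) * v1)‖
          + ‖(starRingEnd ℂ) v1 * (((-(2*δ^2):ℝ):ℂ) * v0)‖ := norm_add_le _ _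
      _ = 2*δ^2*(x*y) + 2*δ^2*(y*x) := by
          simp [norm_mul, Complex.norm_real,
            abs_of_nonneg (by positivity : (0:ℝ) ≤ 2*δ^2)]
          ring
      _ ≤ 4*δ^2*(x*y) := by nlinarith [mul_nonneg hx hy]
  refine hL.trans ?_
  -- RHS
  have hR : (dotProduct (star V) ((Qd l1 l2 δ).mulVec V)).re
      = (l1^2+l2^2+2*δ^2)*x^2 + 2*y^2 - 2*(l1+l2)*r := by
    have heq : dotProduct (star V) ((Qd l1 l2 δ).mulVec V)
        = (starRingEnd ℂ) v0 * (((l1^2+l2^2+2*δ^2:ℝ):ℂ) * v0 + ((-(l1+l2):ℝ):ℂ) * v1)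
          + (starRingEnd ℂ) v1 * (((-(l1+l2):ℝ):ℂ) * v0 + (2:ℂ) * v1) := by
      simp [Qd, dotProduct, Matrix.mulVec, Fin.sum_univ_two, v0, v1]
    rw [heq]
    have h0 : ((starRingEnd ℂ) v0 * v0).re = x^2 := by
      rw [mul_comm, Complex.mul_conj]
      simp [Complex.normSq_eq_norm_sq, ← Complex.ofReal_pow, hxdef]
    have h1 : ((starRingEnd ℂ) v1 * v1).re = y^2 := by
      rw [mul_comm, Complex.mul_conj]
      simp [Complex.normSq_eq_norm_sq, ← Complex.ofReal_pow, hydef]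
    have h2 : ((starRingEnd ℂ) v1 * v0).re = r := by
      have : (starRingEnd ℂ) v1 * v0 = (starRingEnd ℂ) ((starRingEnd ℂ) v0 * v1) := by
        rw [_root_.map_mul, Complex.conj_conj]; ring
      rw [this, Complex.conj_re, hrdef]
    simp only [mul_add, Complex.add_re]
    have e0 : ((starRingEnd ℂ) v0 * (((l1^2+l2^2+2*δ^2:ℝ):ℂ) * v0)).re
        = (l1^2+l2^2+2*δ^2) * x^2 := by
      rw [show (starRingEnd ℂ) v0 * (((l1^2+l2^2+2*δ^2:ℝ):ℂ) * v0)
          = ((l1^2+l2^2+2*δ^2:ℝ):ℂ) * ((starRingEnd ℂ) v0 * v0) by ring,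
        Complex.re_ofReal_mul, h0]
    have e1 : ((starRingEnd ℂ) v0 * (((-(l1+l2):ℝ):ℂ) * v1)).re = -(l1+l2) * r := by
      rw [show (starRingEnd ℂ) v0 * (((-(l1+l2):ℝ):ℂ) * v1)
          = ((-(l1+l2):ℝ):ℂ) * ((starRingEnd ℂ) v0 * v1) by ring,
        Complex.re_ofReal_mul, ← hrdef]
    have e2 : ((starRingEnd ℂ) v1 * (((-(l1+l2):ℝ):ℂ) * v0)).re = -(l1+l2) * r := by
      rw [show (starRingEnd ℂ) v1 * (((-(l1+l2):ℝ):ℂ) * v0)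
          = ((-(l1+l2):ℝ):ℂ) * ((starRingEnd ℂ) v1 * v0) by ring,
        Complex.re_ofReal_mul, h2]
    have e3 : ((starRingEnd ℂ) v1 * ((2:ℂ) * v1)).re = 2 * y^2 := by
      rw [show (starRingEnd ℂ) v1 * ((2:ℂ) * v1) = ((2:ℝ):ℂ) * ((starRingEnd ℂ) v1 * v1) by
        push_cast; ring, Complex.re_ofReal_mul, h1]
    rw [e0, e1, e2, e3]; ring
  rw [hR]
  -- final real inequality
  set t := |l1 + l2| with htdef
  have ht : 0 ≤ t := abs_nonneg _
  have ht2 : t^2 ≤ (3/2) * (l1^2 + l2^2 + 2*δ^2) := by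
    have : t^2 = (l1+l2)^2 := sq_abs _
    nlinarith [sq_nonneg δ]
  have hsr : (l1+l2) * r ≤ t * (x*y) := by
    calc (l1+l2) * r ≤ |(l1+l2) * r| := le_abs_self _
      _ = t * |r| := by rw [abs_mul]
      _ ≤ t * (x*y) := by exact mul_le_mul_of_nonneg_left hr ht
  have hQ : (l1^2+l2^2+2*δ^2)*x^2 + 2*y^2 - 2*t*(x*y)
      ≤ (l1^2+l2^2+2*δ^2)*x^2 + 2*y^2 - 2*(l1+l2)*r := by linarith
  have key : 4*δ^2*(x*y) ≤ 8 * δ * ((l1^2+l2^2+2*δ^2)*x^2 + 2*y^2 - 2*t*(x*y)) := by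
    nlinarith [mul_nonneg hδ0.le (sq_nonneg (δ*x - y)),
      mul_nonneg hδ0.le (sq_nonneg (4*t*x - 7*y)),
      mul_nonneg (mul_nonneg hδ0.le ht) (mul_nonneg hx hy),
      mul_nonneg hδ0.le (mul_nonneg hx hy),
      mul_le_mul_of_nonneg_left ht2 hδ0.le,
      mul_nonneg hδ0.le (mul_nonneg hx hx),
      sq_nonneg l1, sq_nonneg l2]
  have := mul_le_mul_of_nonneg_left hQ (by positivity : (0:ℝ) ≤ 8*δ)
  linarith
end
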